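/- If W = (S, l, ≺) is a cumulative model in which ≺ is irreflexive and transitive (a cumulative ordered model), then the operation C_W is strongly cumulative: for any n and sets X_0,…,X_{n-1} with X_i ⊆ C_W(X_{i+1}) (indices mod n), all C_W(X_i) coincide. -/

import Mathlib

/-- A state `t` is minimal in `V` with respect to `prec`. -/
def isMinimal {S : Type*} (prec : S → S → Prop) (V : Set S) (t : S) : Prop :=
  t ∈ V ∧ ∀ s ∈ V, ¬ prec s t

/-- A set `V` of states is smooth with respect to `prec`. -/
def smoothSet {S : Type*} (prec : S → S → Prop) (V : Set S) : Prop :=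
  ∀ t ∈ V, isMinimal prec V t ∨ ∃ s, isMinimal prec V s ∧ prec s t

/-- A state satisfies a set of formulas iff all its worlds do. -/
def stateSat {L U S : Type*} (sat : U → L → Prop) (l : S → Set U) (s : S) (X : Set L) : Prop :=
  ∀ m ∈ l s, ∀ x ∈ X, sat m x

/-- The set X̂ of states satisfying X. -/
def hatSet {L U S : Type*} (sat : U → L → Prop) (l : S → Set U) (X : Set L) : Set S :=
  {s | stateSat sat l s X}

/-- The inference operation defined by a model. -/
def CW {L U S : Type*} (sat : U → L → Prop) (l : S → Set U) (prec : S → S → Prop)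
    (X : Set L) : Set L :=
  {a | ∀ s, isMinimal prec (hatSet sat l X) s → stateSat sat l s {a}}

lemma minMem_of_subset {L U S : Type*} {sat : U → L → Prop} {l : S → Set U}
    {prec : S → S → Prop} {X Y : Set L} (h : X ⊆ CW sat l prec Y) :
    ∀ s, isMinimal prec (hatSet sat l Y) s → s ∈ hatSet sat l X := by
  intro s hs m hm x hx
  exact h hx s hs m hm x rfl

open Fin.NatCast

/-- a cumulative ordered model (irreflexive and transitive
preference relation) defines a strongly cumulative operation. -/
theorem stmt_12 {L U S : Type*} (Cn : Set L → Set L) (sat : U → L → Prop)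
    (l : S → Set U) (prec : S → S → Prop)
    (hCn : ∀ (X : Set L) (a : L), a ∈ Cn X ↔ ∀ m : U, (∀ x ∈ X, sat m x) → sat m a)
    (hne : ∀ s : S, (l s).Nonempty)
    (hsmooth : ∀ X : Set L, smoothSet prec (hatSet sat l X))
    (hirr : ∀ s : S, ¬ prec s s)
    (htrans : ∀ s t v : S, prec s t → prec t v → prec s v) :
    ∀ (n : ℕ) [NeZero n] (X : Fin n → Set L),
      (∀ i : Fin n, X i ⊆ CW sat l prec (X (i + 1))) →
      ∀ i j : Fin n, CW sat l prec (X i) = CW sat l prec (X j) := by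
  intro n inst X hcyc
  obtain ⟨m, rfl⟩ := Nat.exists_eq_succ_of_ne_zero (NeZero.ne n)
  -- step lemma: minimal states of X̂ p lie in X̂ (p-1)
  have hstep : ∀ p : Fin (m+1), ∀ t, isMinimal prec (hatSet sat l (X p)) t →
      t ∈ hatSet sat l (X (p - 1)) := by
    intro p t ht
    have h := hcyc (p - 1)
    rw [sub_add_cancel] at h
    exact minMem_of_subset h t ht
  have hcast : ∀ (p : Fin (m+1)) (k : ℕ), p - ((k+1 : ℕ) : Fin (m+1)) = p - (k : Fin (m+1)) - 1 := by
    intro p k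
    push_cast
    rw [sub_sub]
  -- main transfer lemma
  have key : ∀ (p : Fin (m+1)) (s : S), isMinimal prec (hatSet sat l (X p)) s →
      ∀ k : ℕ, k ≤ m + 1 → isMinimal prec (hatSet sat l (X (p - (k : Fin (m+1))))) s := by
    intro p s hs
    set Q : ℕ → Prop := fun k => ∃ t, isMinimal prec (hatSet sat l (X (p - (k : Fin (m+1))))) t ∧ prec t s with hQ
    have hQstep : ∀ k, Q k → Q (k+1) := by
      rintro k ⟨t, ht, hts⟩
      have htm : t ∈ hatSet sat l (X (p - (k : Fin (m+1)) - 1)) := hstep _ t ht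
      rcases hsmooth (X (p - (k : Fin (m+1)) - 1)) t htm with h | ⟨t', ht', hlt⟩
      · exact ⟨t, by rw [hcast]; exact h, hts⟩
      · exact ⟨t', by rw [hcast]; exact ht', htrans _ _ _ hlt hts⟩
    have hQn : ¬ Q (m+1) := by
      rintro ⟨t, ht, hts⟩
      rw [Fin.natCast_self, sub_zero] at ht
      exact hs.2 t ht.1 hts
    have hQnone : ∀ k, k ≤ m + 1 → ¬ Q k := by
      intro k hk hq
      apply hQn
      have hiter : ∀ d, Q k → Q (k + d) := by
        intro d
        induction d with
        | zero => exact id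
        | succ d ih => intro h; exact hQstep _ (ih h)
      have := hiter (m + 1 - k) hq
      rwa [Nat.add_sub_cancel' hk] at this
    intro k
    induction k with
    | zero => intro _; simpa using hs
    | succ k ih =>
      intro hk
      have hks : k ≤ m + 1 := Nat.le_of_succ_le hk
      have hmin := ih hks
      have hmem : s ∈ hatSet sat l (X (p - (k : Fin (m+1)) - 1)) := hstep _ s hmin
      rcases hsmooth (X (p - (k : Fin (m+1)) - 1)) s hmem with h | ⟨t', ht', hlt⟩
      · rw [hcast]; exact h
      · exact absurd ⟨t', by rw [hcast]; exact ht', hlt⟩ (hQnone (k+1) hk)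
  -- minimal states coincide for all indices
  have hmineq : ∀ i j : Fin (m+1), ∀ s, isMinimal prec (hatSet sat l (X j)) s →
      isMinimal prec (hatSet sat l (X i)) s := by
    intro i j s hs
    have hk : ((((j - i : Fin (m+1))).val : ℕ) : Fin (m+1)) = j - i := Fin.cast_val_eq_self _
    have := key j s hs (j - i).val (Nat.le_of_lt (j - i).isLt)
    rwa [hk, sub_sub_cancel] at this
  intro i j
  ext a
  constructor
  · intro h s hmin
    exact h s (hmineq i j s hmin)
  · intro h s hmin
    exact h s (hmineq j i s hmin)
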